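/- For differentiable u, v : ℝ⁴ × (0,∞) → ℝ (coordinates (x₁,y₁,x₂,y₂,t)), define {u,v} = (cos(x₂)/t)(∂_{x₁}u·∂_{y₁}v − ∂_{y₁}u·∂_{x₁}v) + e^{y₂}·y₁·(∂_t u·∂_{x₁}v − ∂_{x₁}u·∂_t v) + e^{y₂}·x₁·(∂_t u·∂_{y₁}v − ∂_{y₁}u·∂_t v). Let C(x₁,y₁,x₂,y₂,t) := cos(x₂)·log(t) − (e^{y₂}/2)·(x₁² − y₁²). Then for every differentiable g and every point with t > 0, {C, g} = 0. -/

import Mathlib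

/-- Partial derivative in the coordinate `x₁` of `(x₁,y₁,x₂,y₂,t) ∈ ℝ⁵`. -/
noncomputable def pdx1 (u : ℝ × ℝ × ℝ × ℝ × ℝ → ℝ) (P : ℝ × ℝ × ℝ × ℝ × ℝ) : ℝ :=
  deriv (fun s => u (s, P.2.1, P.2.2.1, P.2.2.2.1, P.2.2.2.2)) P.1

/-- Partial derivative in the coordinate `y₁`. -/
noncomputable def pdy1 (u : ℝ × ℝ × ℝ × ℝ × ℝ → ℝ) (P : ℝ × ℝ × ℝ × ℝ × ℝ) : ℝ :=
  deriv (fun s => u (P.1, s, P.2.2.1, P.2.2.2.1, P.2.2.2.2)) P.2.1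

/-- Partial derivative in the coordinate `t`. -/
noncomputable def pdt (u : ℝ × ℝ × ℝ × ℝ × ℝ → ℝ) (P : ℝ × ℝ × ℝ × ℝ × ℝ) : ℝ :=
  deriv (fun s => u (P.1, P.2.1, P.2.2.1, P.2.2.2.1, s)) P.2.2.2.2

/-- The Poissonization of the 4D Jacobi structure
`Λ = cos(x₂) ∂_{x₁} ∧ ∂_{y₁}`, `E = e^{y₂}(y₁ ∂_{x₁} + x₁ ∂_{y₁})` on
coordinates `(x₁,y₁,x₂,y₂,t)`, `t > 0`. -/
noncomputable def br4D (u v : ℝ × ℝ × ℝ × ℝ × ℝ → ℝ) (P : ℝ × ℝ × ℝ × ℝ × ℝ) : ℝ :=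
  (Real.cos P.2.2.1 / P.2.2.2.2) * (pdx1 u P * pdy1 v P - pdy1 u P * pdx1 v P)
  + Real.exp P.2.2.2.1 * P.2.1 * (pdt u P * pdx1 v P - pdx1 u P * pdt v P)
  + Real.exp P.2.2.2.1 * P.1 * (pdt u P * pdy1 v P - pdy1 u P * pdt v P)

/-- The Casimir candidate `C = cos(x₂)·log t − (e^{y₂}/2)(x₁² − y₁²)`. -/
noncomputable def casimir4D (P : ℝ × ℝ × ℝ × ℝ × ℝ) : ℝ :=
  Real.cos P.2.2.1 * Real.log P.2.2.2.2
    - (Real.exp P.2.2.2.1 / 2) * (P.1 ^ 2 - P.2.1 ^ 2)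

lemma pdx1_cas (P : ℝ × ℝ × ℝ × ℝ × ℝ) :
    pdx1 casimir4D P = -(Real.exp P.2.2.2.1 * P.1) := by
  unfold pdx1 casimir4D
  have : (fun s : ℝ => Real.cos P.2.2.1 * Real.log P.2.2.2.2
      - Real.exp P.2.2.2.1 / 2 * (s ^ 2 - P.2.1 ^ 2)) =
      fun s : ℝ => Real.cos P.2.2.1 * Real.log P.2.2.2.2
      - Real.exp P.2.2.2.1 / 2 * (s ^ 2 - P.2.1 ^ 2) := rfl
  rw [show (fun s : ℝ => Real.cos P.2.2.1 * Real.log P.2.2.2.2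
      - Real.exp P.2.2.2.1 / 2 * (s ^ 2 - P.2.1 ^ 2)) = _ from rfl]
  have h : HasDerivAt (fun s : ℝ => Real.cos P.2.2.1 * Real.log P.2.2.2.2
      - Real.exp P.2.2.2.1 / 2 * (s ^ 2 - P.2.1 ^ 2))
      (-(Real.exp P.2.2.2.1 * P.1)) P.1 := by
    have h1 : HasDerivAt (fun s : ℝ => s ^ 2 - P.2.1 ^ 2) (2 * P.1) P.1 := by
      simpa using ((hasDerivAt_pow 2 P.1).sub_const (P.2.1 ^ 2))
    have := (h1.const_mul (Real.exp P.2.2.2.1 / 2)).const_sub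
      (Real.cos P.2.2.1 * Real.log P.2.2.2.2)
    exact this.congr_deriv (by ring)
  exact h.deriv

lemma pdy1_cas (P : ℝ × ℝ × ℝ × ℝ × ℝ) :
    pdy1 casimir4D P = Real.exp P.2.2.2.1 * P.2.1 := by
  unfold pdy1 casimir4D
  have h : HasDerivAt (fun s : ℝ => Real.cos P.2.2.1 * Real.log P.2.2.2.2
      - Real.exp P.2.2.2.1 / 2 * (P.1 ^ 2 - s ^ 2))
      (Real.exp P.2.2.2.1 * P.2.1) P.2.1 := by
    have h1 : HasDerivAt (fun s : ℝ => P.1 ^ 2 - s ^ 2) (-(2 * P.2.1)) P.2.1 := by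
      simpa using ((hasDerivAt_pow 2 P.2.1).const_sub (P.1 ^ 2))
    have := (h1.const_mul (Real.exp P.2.2.2.1 / 2)).const_sub
      (Real.cos P.2.2.1 * Real.log P.2.2.2.2)
    exact this.congr_deriv (by ring)
  exact h.deriv

lemma pdt_cas (P : ℝ × ℝ × ℝ × ℝ × ℝ) (ht : 0 < P.2.2.2.2) :
    pdt casimir4D P = Real.cos P.2.2.1 / P.2.2.2.2 := by
  unfold pdt casimir4D
  have h : HasDerivAt (fun s : ℝ => Real.cos P.2.2.1 * Real.log s
      - Real.exp P.2.2.2.1 / 2 * (P.1 ^ 2 - P.2.1 ^ 2))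
      (Real.cos P.2.2.1 / P.2.2.2.2) P.2.2.2.2 := by
    have h1 : HasDerivAt Real.log (1 / P.2.2.2.2) P.2.2.2.2 := by
      simpa [one_div] using Real.hasDerivAt_log (ne_of_gt ht)
    have := (h1.const_mul (Real.cos P.2.2.1)).sub_const
      (Real.exp P.2.2.2.1 / 2 * (P.1 ^ 2 - P.2.1 ^ 2))
    exact this.congr_deriv (by ring)
  exact h.deriv

/-- `C = cos(x₂) log t − (e^{y₂}/2)(x₁² − y₁²)` is a Casimir of the
Poissonized 4D Jacobi structure. -/
theorem stmt_14 (g : ℝ × ℝ × ℝ × ℝ × ℝ → ℝ)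
    (hg : ∀ P : ℝ × ℝ × ℝ × ℝ × ℝ, 0 < P.2.2.2.2 → DifferentiableAt ℝ g P) :
    ∀ P : ℝ × ℝ × ℝ × ℝ × ℝ, 0 < P.2.2.2.2 → br4D casimir4D g P = 0 := by
  intro P ht
  unfold br4D
  rw [pdx1_cas, pdy1_cas, pdt_cas P ht]
  ring
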